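/- Let t ≥ 2 and let n_1 < n_2 < ... < n_t and ℓ_1 < ℓ_2 < ... < ℓ_t be positive integers with ℓ_i ≤ n_i for all 1 ≤ i ≤ t and n_i < ℓ_{i+1} for all 1 ≤ i ≤ t−1. Then m(n_1,...,n_t, ℓ_1,...,ℓ_t) ≥ (∑_{1≤i<j≤t} n_i n_j) − n_1 n_2 + (ℓ_1−1)n_2 + (n_1−ℓ_1+1)(ℓ_2−1). -/

import Mathlib

lemma card_val_lt (b q : ℕ) (hq : q ≤ b) :
    (Finset.filter (fun v : Fin b => (v : ℕ) < q) Finset.univ).card = q := by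
  have h1 : (Finset.filter (fun v : Fin b => (v : ℕ) < q) Finset.univ).image Fin.val
      = Finset.range q := by
    ext m
    simp only [Finset.mem_image, Finset.mem_filter, Finset.mem_univ, true_and,
      Finset.mem_range]
    constructor
    · rintro ⟨v, hv, rfl⟩; exact hv
    · intro hm; exact ⟨⟨m, lt_of_lt_of_le hm hq⟩, hm, rfl⟩
  have h2 := Finset.card_image_of_injective
    (Finset.filter (fun v : Fin b => (v : ℕ) < q) Finset.univ) (Fin.val_injective)
  rw [h1, Finset.card_range] at h2
  exact h2.symm

lemma mono_surj_le {n m : ℕ} {f : Fin n → Fin m} (hm : Monotone f)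
    (hs : Function.Surjective f) (u : Fin n) : (f u : ℕ) ≤ (u : ℕ) := by
  choose g hg using hs
  have key : ∀ j : Fin m, (j : ℕ) < (f u : ℕ) → (g j : ℕ) < (u : ℕ) := by
    intro j hj
    by_contra hc
    push_neg at hc
    have h1 : u ≤ g j := Fin.le_def.mpr hc
    have h2 := hm h1
    rw [hg] at h2
    exact absurd (Fin.le_def.mp h2) (by omega)
  have hinj : Set.InjOn g
      (Finset.filter (fun j : Fin m => (j : ℕ) < (f u : ℕ)) Finset.univ) := by
    intro a _ b _ hab
    have := congrArg f hab
    rwa [hg, hg] at this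
  have hcard : (Finset.filter (fun j : Fin m => (j : ℕ) < (f u : ℕ)) Finset.univ).card ≤
      (Finset.filter (fun x : Fin n => (x : ℕ) < (u : ℕ)) Finset.univ).card := by
    apply Finset.card_le_card_of_injOn g
    · intro j hj
      simp only [Finset.mem_coe, Finset.mem_filter, Finset.mem_univ, true_and] at hj ⊢
      exact key j hj
    · exact hinj
  rwa [card_val_lt m _ (f u).isLt.le, card_val_lt n _ u.isLt.le] at hcard

lemma special_ncard (a b p q : ℕ) (hp : p ≤ a) (hq : q ≤ b) :
    {x : Fin a × Fin b | (x.1 : ℕ) < p ∨ (x.2 : ℕ) < q}.ncard = p * b + (a - p) * q := by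
  classical
  rw [Set.ncard_eq_toFinset_card']
  rw [Set.toFinset_setOf]
  rw [Finset.card_filter]
  rw [Fintype.sum_prod_type]
  have inner : ∀ u : Fin a,
      (∑ v : Fin b, if ((u : ℕ) < p ∨ (v : ℕ) < q) then 1 else 0)
        = if (u : ℕ) < p then b else q := by
    intro u
    by_cases hu : (u : ℕ) < p
    · simp [hu]
    · simp only [hu, false_or, if_neg hu]
      rw [← Finset.card_filter]
      exact card_val_lt b q hq
  rw [Finset.sum_congr rfl (fun u _ => inner u)]
  rw [Finset.sum_ite, Finset.sum_const, Finset.sum_const]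
  have c1 := card_val_lt a p hp
  have c2 : (Finset.filter (fun u : Fin a => ¬ (u : ℕ) < p) Finset.univ).card = a - p := by
    have := Finset.card_filter_add_card_filter_not
      (s := (Finset.univ : Finset (Fin a))) (p := fun u : Fin a => (u : ℕ) < p)
    simp only [Finset.card_univ, Fintype.card_fin] at this
    omega
  rw [c1, c2]
  ring

lemma perm_eq_one_of_le {t : ℕ} (τ : Equiv.Perm (Fin t))
    (h : ∀ i : Fin t, (i : ℕ) ≤ (τ i : ℕ)) : τ = 1 := by
  have hsum : ∑ i : Fin t, ((τ i : ℕ)) = ∑ i : Fin t, (i : ℕ) :=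
    Equiv.sum_comp τ (fun i : Fin t => (i : ℕ))
  have hall : ∀ i : Fin t, (τ i : ℕ) = i := by
    by_contra hc
    push_neg at hc
    obtain ⟨i, hi⟩ := hc
    have hlt : ∑ j : Fin t, (j : ℕ) < ∑ j : Fin t, (τ j : ℕ) :=
      Finset.sum_lt_sum (fun j _ => h j)
        ⟨i, Finset.mem_univ i, lt_of_le_of_ne (h i) (Ne.symm hi)⟩
    omega
  exact Equiv.ext fun i => Fin.ext (hall i)

/-- The extremal graph: complete between all pairs of parts except parts `i0 < i1`,
where it is the standard extremal bipartite construction. -/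
def myE (t : ℕ) (l : Fin t → ℕ) (n : Fin t → ℕ) (i0 i1 : Fin t) :
    ∀ i j : Fin t, Fin (n i) → Fin (n j) → Prop :=
  fun i j u v => i ≠ j ∧
    (i = i0 → j = i1 → ((u : ℕ) + 1 < l i0 ∨ (v : ℕ) + 1 < l i1)) ∧
    (i = i1 → j = i0 → ((v : ℕ) + 1 < l i0 ∨ (u : ℕ) + 1 < l i1))



/-- An ordered `t`-partite graph with parts of sizes `n 0, …, n (t-1)` (encoded by a
symmetric family of edge relations between its parts) contains the complete multipartite
graph `K_{l 0, …, l (t-1)}` as an interval minor: there are a permutation `τ` of the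
parts and monotone surjections `f i : Fin (n (τ i)) → Fin (l i)` so that any two classes
in distinct parts are joined by an edge. -/
def ContainsMultiIntervalMinor (t : ℕ) (n l : Fin t → ℕ)
    (E : ∀ i j : Fin t, Fin (n i) → Fin (n j) → Prop) : Prop :=
  ∃ τ : Equiv.Perm (Fin t), ∃ f : ∀ i : Fin t, Fin (n (τ i)) → Fin (l i),
    (∀ i, Monotone (f i) ∧ Function.Surjective (f i)) ∧
    ∀ i j : Fin t, i ≠ j → ∀ a : Fin (l i), ∀ b : Fin (l j),
      ∃ (u : Fin (n (τ i))) (v : Fin (n (τ j))),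
        f i u = a ∧ f j v = b ∧ E (τ i) (τ j) u v

/-- `G` is `K_{l 0, …, l (t-1)}`-interval minor free. -/
def MultiIntervalMinorFree (t : ℕ) (n l : Fin t → ℕ)
    (E : ∀ i j : Fin t, Fin (n i) → Fin (n j) → Prop) : Prop :=
  ¬ ContainsMultiIntervalMinor t n l E

/-- The number of edges of an ordered `t`-partite graph. -/
noncomputable def multiEdgeCount (t : ℕ) (n : Fin t → ℕ)
    (E : ∀ i j : Fin t, Fin (n i) → Fin (n j) → Prop) : ℕ :=
  ∑ i : Fin t, ∑ j : Fin t,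
    if i < j then Set.ncard {x : Fin (n i) × Fin (n j) | E i j x.1 x.2} else 0

/-- The set of edge counts achieved by `K_{l 0, …, l (t-1)}`-interval minor free ordered
`t`-partite graphs with parts of sizes `n 0, …, n (t-1)`; its greatest element is
`m(n_1,…,n_t,ℓ_1,…,ℓ_t)`. -/
def multiExtremalSet (t : ℕ) (n l : Fin t → ℕ) : Set ℕ :=
  {N | ∃ E : ∀ i j : Fin t, Fin (n i) → Fin (n j) → Prop,
    (∀ i j u v, E i j u v ↔ E j i v u) ∧
    MultiIntervalMinorFree t n l E ∧ multiEdgeCount t n E = N}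

theorem stmt11 (t : ℕ) (ht : 2 ≤ t) (n l : Fin t → ℕ)
    (hn : StrictMono n) (hl : StrictMono l)
    (hlpos : ∀ i, 0 < l i) (hln : ∀ i, l i ≤ n i)
    (hnl : ∀ i j : Fin t, (i : ℕ) + 1 = (j : ℕ) → n i < l j) :
    ∃ N ∈ multiExtremalSet t n l,
      (∑ i : Fin t, ∑ j : Fin t, if i < j then n i * n j else 0)
        - n ⟨0, by omega⟩ * n ⟨1, by omega⟩
        + (l ⟨0, by omega⟩ - 1) * n ⟨1, by omega⟩
        + (n ⟨0, by omega⟩ - l ⟨0, by omega⟩ + 1) * (l ⟨1, by omega⟩ - 1) ≤ N := by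
  classical
  have h0t : 0 < t := by omega
  have h1t : 1 < t := by omega
  set i0 : Fin t := ⟨0, h0t⟩ with hi0def
  set i1 : Fin t := ⟨1, h1t⟩ with hi1def
  have hi01 : i0 < i1 := Fin.mk_lt_mk.mpr one_pos
  set E : ∀ i j : Fin t, Fin (n i) → Fin (n j) → Prop := myE t l n i0 i1 with hEdef
  -- symmetry
  have hsymm : ∀ i j u v, E i j u v ↔ E j i v u := by
    intro i j u v
    simp only [hEdef, myE]
    constructor
    · rintro ⟨h1, h2, h3⟩
      exact ⟨h1.symm, fun a b => h3 b a, fun a b => h2 b a⟩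
    · rintro ⟨h1, h2, h3⟩
      exact ⟨h1.symm, fun a b => h3 b a, fun a b => h2 b a⟩
  -- minor freeness
  have hfree : MultiIntervalMinorFree t n l E := by
    rintro ⟨τ, f, hf, hcon⟩
    have hτ : τ = 1 := by
      apply perm_eq_one_of_le
      intro i
      by_contra hc
      push_neg at hc
      have hcard : l i ≤ n (τ i) := by
        have h := Fintype.card_le_of_surjective (f i) (hf i).2
        simpa using h
      have hj : ((i : ℕ) - 1) < t := by omega
      have hmono : n (τ i) ≤ n ⟨(i : ℕ) - 1, hj⟩ := by
        apply hn.monotone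
        exact Fin.le_def.mpr (Nat.le_pred_of_lt hc)
      have hlast := hnl ⟨(i : ℕ) - 1, hj⟩ i (by
        show (i : ℕ) - 1 + 1 = (i : ℕ)
        omega)
      omega
    subst hτ
    have hne01 : i0 ≠ i1 := ne_of_lt hi01
    obtain ⟨u, v, hu, hv, he⟩ := hcon i0 i1 hne01
      ⟨l i0 - 1, by have := hlpos i0; omega⟩ ⟨l i1 - 1, by have := hlpos i1; omega⟩
    have h1 : (f i0 u : ℕ) ≤ (u : ℕ) := mono_surj_le (hf i0).1 (hf i0).2 u
    have h2 : (f i1 v : ℕ) ≤ (v : ℕ) := mono_surj_le (hf i1).1 (hf i1).2 v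
    rw [hu] at h1
    rw [hv] at h2
    simp only [hEdef, myE, Equiv.Perm.one_apply] at he
    obtain ⟨-, hAB, -⟩ := he
    have hd := hAB (by trivial) (by trivial)
    have hp0 := hlpos i0
    have hp1 := hlpos i1
    simp only [Fin.val_mk] at h1 h2 hd
    omega
  -- edge counts
  have hfull : ∀ i j : Fin t, i < j → ¬(i = i0 ∧ j = i1) →
      {x : Fin (n i) × Fin (n j) | E i j x.1 x.2}.ncard = n i * n j := by
    intro i j hij hne
    have hset : {x : Fin (n i) × Fin (n j) | E i j x.1 x.2} = Set.univ := by
      ext x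
      simp only [hEdef, myE, Set.mem_setOf_eq, Set.mem_univ, iff_true]
      refine ⟨ne_of_lt hij, fun h1 h2 => absurd ⟨h1, h2⟩ hne, fun h1 h2 => ?_⟩
      subst h1; subst h2
      rw [Fin.lt_def] at hij
      simp [hi0def, hi1def] at hij
    rw [hset, Set.ncard_univ]
    simp [Nat.card_eq_fintype_card]
  have hspecial : {x : Fin (n i0) × Fin (n i1) | E i0 i1 x.1 x.2}.ncard
      = (l i0 - 1) * n i1 + (n i0 - (l i0 - 1)) * (l i1 - 1) := by
    have hne01 : i0 ≠ i1 := ne_of_lt hi01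
    have hp0 := hlpos i0
    have hp1 := hlpos i1
    have hset : {x : Fin (n i0) × Fin (n i1) | E i0 i1 x.1 x.2}
        = {x : Fin (n i0) × Fin (n i1) | (x.1 : ℕ) < l i0 - 1 ∨ (x.2 : ℕ) < l i1 - 1} := by
      ext x
      simp only [hEdef, myE, Set.mem_setOf_eq]
      constructor
      · rintro ⟨-, h, -⟩
        have := h (by trivial) (by trivial)
        omega
      · intro h
        exact ⟨hne01, fun _ _ => by omega, fun h1 _ => absurd h1 hne01⟩
    rw [hset]
    exact special_ncard _ _ _ _ (by have := hln i0; omega) (by have := hln i1; omega)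
  -- the sum bookkeeping
  have key : ∀ F G : Fin t → Fin t → ℕ, (∀ i j, ¬(i = i0 ∧ j = i1) → F i j = G i j) →
      (∑ i : Fin t, ∑ j : Fin t, F i j) + G i0 i1
        = (∑ i : Fin t, ∑ j : Fin t, G i j) + F i0 i1 := by
    intro F G hFG
    have hmem : (i0, i1) ∈ (Finset.univ ×ˢ Finset.univ : Finset (Fin t × Fin t)) := by
      simp
    have eF : ∑ i : Fin t, ∑ j : Fin t, F i j
        = F i0 i1 + ∑ p ∈ (Finset.univ ×ˢ Finset.univ : Finset (Fin t × Fin t)).erase (i0, i1),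
            F p.1 p.2 := by
      rw [← Finset.sum_product']
      exact (Finset.add_sum_erase _ _ hmem).symm
    have eG : ∑ i : Fin t, ∑ j : Fin t, G i j
        = G i0 i1 + ∑ p ∈ (Finset.univ ×ˢ Finset.univ : Finset (Fin t × Fin t)).erase (i0, i1),
            G p.1 p.2 := by
      rw [← Finset.sum_product']
      exact (Finset.add_sum_erase _ _ hmem).symm
    have hcong : ∑ p ∈ (Finset.univ ×ˢ Finset.univ : Finset (Fin t × Fin t)).erase (i0, i1),
        F p.1 p.2
        = ∑ p ∈ (Finset.univ ×ˢ Finset.univ : Finset (Fin t × Fin t)).erase (i0, i1),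
            G p.1 p.2 := by
      apply Finset.sum_congr rfl
      intro p hp
      apply hFG
      rintro ⟨h1, h2⟩
      exact (Finset.mem_erase.mp hp).1 (Prod.ext h1 h2)
    omega
  have hkey := key
    (fun i j => if i < j then {x : Fin (n i) × Fin (n j) | E i j x.1 x.2}.ncard else 0)
    (fun i j => if i < j then n i * n j else 0)
    (by
      intro i j hne
      by_cases hij : i < j
      · simp only [if_pos hij]
        exact hfull i j hij hne
      · simp [hij])
  simp only [if_pos hi01] at hkey
  rw [hspecial] at hkey
  -- hkey : multiEdgeCount-sum + n i0 * n i1 = S' + e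
  refine ⟨multiEdgeCount t n E, ⟨E, hsymm, hfree, rfl⟩, ?_⟩
  show (∑ i : Fin t, ∑ j : Fin t, if i < j then n i * n j else 0)
      - n i0 * n i1 + (l i0 - 1) * n i1 + (n i0 - l i0 + 1) * (l i1 - 1)
      ≤ multiEdgeCount t n E
  have hY : n i0 - l i0 + 1 = n i0 - (l i0 - 1) := by
    have := hln i0; have := hlpos i0; omega
  rw [hY]
  have hle : (if i0 < i1 then n i0 * n i1 else 0)
      ≤ ∑ i : Fin t, ∑ j : Fin t, if i < j then n i * n j else 0 := by
    calc (if i0 < i1 then n i0 * n i1 else 0)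
        ≤ ∑ j : Fin t, if i0 < j then n i0 * n j else 0 :=
          Finset.single_le_sum
            (f := fun j : Fin t => if i0 < j then n i0 * n j else 0)
            (fun _ _ => Nat.zero_le _) (Finset.mem_univ i1)
      _ ≤ ∑ i : Fin t, ∑ j : Fin t, if i < j then n i * n j else 0 :=
          Finset.single_le_sum
            (f := fun i : Fin t => ∑ j : Fin t, if i < j then n i * n j else 0)
            (fun _ _ => Nat.zero_le _) (Finset.mem_univ i0)
  rw [if_pos hi01] at hle
  unfold multiEdgeCount
  set S' : ℕ := ∑ i : Fin t, ∑ j : Fin t, if i < j then n i * n j else 0 with hS'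
  set N : ℕ := ∑ i : Fin t, ∑ j : Fin t,
    if i < j then {x : Fin (n i) × Fin (n j) | E i j x.1 x.2}.ncard else 0 with hN
  set P : ℕ := n i0 * n i1 with hP
  set X : ℕ := (l i0 - 1) * n i1 with hX
  set Y : ℕ := (n i0 - (l i0 - 1)) * (l i1 - 1) with hYv
  omega
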